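/- Let π be a policy, π̃ another policy, ω ∈ [0,1], and define π' = (1-ω)π + ωπ̃. Let Q : S × A → ℝ and χ = ‖H Q − H_{π̃} Q‖∞. Then ‖Q^{π} − Q^{π'}‖∞ ≤ (ω/(1−γ)) (‖Q* − Q^{π}‖∞ + 2 ‖Q − Q^{π}‖∞ + χ). -/

import Mathlib

noncomputable section

/-- A policy assigns to each state a probability distribution over actions. -/
def IsPolicy {S A : Type*} [Fintype A] (π : S → A → ℝ) : Prop :=
  (∀ s a, 0 ≤ π s a) ∧ ∀ s, ∑ a, π s a = 1

/-- A transition kernel assigns to each state-action pair a probability distribution over states. -/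
def IsKernel {S A : Type*} [Fintype S] (p : S → A → S → ℝ) : Prop :=
  (∀ s a s', 0 ≤ p s a s') ∧ ∀ s a, ∑ s', p s a s' = 1

/-- Sup norm on `S × A → ℝ` (functions `S → A → ℝ`). -/
def supNorm {S A : Type*} [Fintype S] [Fintype A] [Nonempty S] [Nonempty A]
    (Q : S → A → ℝ) : ℝ :=
  Finset.univ.sup' Finset.univ_nonempty (fun sa : S × A => |Q sa.1 sa.2|)

/-- Total variation distance between two distributions on a finite set. -/
def dTV {Ω : Type*} [Fintype Ω] (p₁ p₂ : Ω → ℝ) : ℝ :=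
  (∑ x, |p₁ x - p₂ x|) / 2

/-- Weighted ℓ₂ norm with weights ν. -/
def nuNorm {S A : Type*} [Fintype S] [Fintype A] (ν : S → A → ℝ) (Q : S → A → ℝ) : ℝ :=
  Real.sqrt (∑ s, ∑ a, ν s a * (Q s a) ^ 2)

/-- Weighted ℓ₂ inner product with weights ν. -/
def nuInner {S A : Type*} [Fintype S] [Fintype A] (ν : S → A → ℝ) (Q₁ Q₂ : S → A → ℝ) : ℝ :=
  ∑ s, ∑ a, ν s a * Q₁ s a * Q₂ s a

/-- Bellman operator associated with a policy π. -/
def bellman {S A : Type*} [Fintype S] [Fintype A]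
    (p : S → A → S → ℝ) (R : S → A → ℝ) (γ : ℝ) (π : S → A → ℝ)
    (Q : S → A → ℝ) : S → A → ℝ :=
  fun s a => R s a + γ * ∑ s', p s a s' * ∑ a', π s' a' * Q s' a'

/-- Bellman optimality operator. -/
def bellmanOpt {S A : Type*} [Fintype S] [Fintype A] [Nonempty A]
    (p : S → A → S → ℝ) (R : S → A → ℝ) (γ : ℝ)
    (Q : S → A → ℝ) : S → A → ℝ :=
  fun s a => R s a + γ * ∑ s', p s a s' *
    Finset.univ.sup' Finset.univ_nonempty (fun a' => Q s' a')

/-- Expected operator F̄(Q,π) = (I − D)Q + D H_π Q, where D has diagonal entries μ_b(s)π_b(a|s). -/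
def Fbar {S A : Type*} [Fintype S] [Fintype A]
    (p : S → A → S → ℝ) (R : S → A → ℝ) (γ : ℝ)
    (μb : S → ℝ) (πb : S → A → ℝ) (π : S → A → ℝ) (Q : S → A → ℝ) : S → A → ℝ :=
  fun s a => (1 - μb s * πb s a) * Q s a + μb s * πb s a * bellman p R γ π Q s a

/-- Importance-sampling TD operator, for y = ((s₁,a₁),(s₂,a₂)). -/
def FIS {S A : Type*} [Fintype S] [Fintype A] [DecidableEq S] [DecidableEq A]
    (R : S → A → ℝ) (γ : ℝ) (πb : S → A → ℝ)
    (Q : S → A → ℝ) (y : (S × A) × S × A) (π : S → A → ℝ) : S → A → ℝ :=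
  fun s a => if (s, a) = y.1 then
      R y.1.1 y.1.2 + γ * (π y.2.1 y.2.2 / πb y.2.1 y.2.2) * Q y.2.1 y.2.2
    else Q s a

/-- Expected-TD operator, for u = (s₁,a₁,s₂). -/
def FETD {S A : Type*} [Fintype S] [Fintype A] [DecidableEq S] [DecidableEq A]
    (R : S → A → ℝ) (γ : ℝ)
    (Q : S → A → ℝ) (u : S × A × S) (π : S → A → ℝ) : S → A → ℝ :=
  fun s a => if (s, a) = (u.1, u.2.1) then
      R u.1 u.2.1 + γ * ∑ a', π u.2.2 a' * Q u.2.2 a'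
    else Q s a

/-- State transition matrix induced by a policy. -/
def Pmat {S A : Type*} [Fintype A] (p : S → A → S → ℝ) (π : S → A → ℝ) : Matrix S S ℝ :=
  Matrix.of fun s s' => ∑ a, π s a * p s a s'

end


section aux

variable {S A : Type*} [Fintype S] [Fintype A] [Nonempty S] [Nonempty A]

lemma abs_le_supNorm (Q : S → A → ℝ) (s : S) (a : A) : |Q s a| ≤ supNorm Q :=
  Finset.le_sup' (fun sa : S × A => |Q sa.1 sa.2|) (Finset.mem_univ (s, a))

lemma supNorm_le {Q : S → A → ℝ} {c : ℝ} (h : ∀ s a, |Q s a| ≤ c) : supNorm Q ≤ c :=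
  Finset.sup'_le _ _ fun sa _ => h sa.1 sa.2

lemma supNorm_nonneg (Q : S → A → ℝ) : 0 ≤ supNorm Q :=
  le_trans (abs_nonneg _) (abs_le_supNorm Q (Classical.arbitrary S) (Classical.arbitrary A))

lemma supNorm_sub_comm (f g : S → A → ℝ) :
    supNorm (fun s a => f s a - g s a) = supNorm (fun s a => g s a - f s a) := by
  unfold supNorm
  congr 1
  funext sa
  exact abs_sub_comm _ _

lemma prob_avg_le {ι : Type*} [Fintype ι] {w x : ι → ℝ} {M : ℝ}
    (hw : ∀ i, 0 ≤ w i) (hw1 : ∑ i, w i = 1) (hx : ∀ i, x i ≤ M) :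
    ∑ i, w i * x i ≤ M := by
  calc ∑ i, w i * x i ≤ ∑ i, w i * M :=
        Finset.sum_le_sum fun i _ => mul_le_mul_of_nonneg_left (hx i) (hw i)
    _ = M := by rw [← Finset.sum_mul, hw1, one_mul]

lemma prob_avg_abs_le {ι : Type*} [Fintype ι] {w x : ι → ℝ} {M : ℝ}
    (hw : ∀ i, 0 ≤ w i) (hw1 : ∑ i, w i = 1) (hx : ∀ i, |x i| ≤ M) :
    |∑ i, w i * x i| ≤ M := by
  calc |∑ i, w i * x i| ≤ ∑ i, |w i * x i| := Finset.abs_sum_le_sum_abs _ _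
    _ = ∑ i, w i * |x i| := by
        refine Finset.sum_congr rfl fun i _ => ?_
        rw [abs_mul, abs_of_nonneg (hw i)]
    _ ≤ M := prob_avg_le hw hw1 hx

lemma sup'_sub_abs_le {ι : Type*} [Fintype ι] [Nonempty ι] (f g : ι → ℝ) {M : ℝ}
    (h : ∀ i, |f i - g i| ≤ M) :
    |Finset.univ.sup' Finset.univ_nonempty f - Finset.univ.sup' Finset.univ_nonempty g| ≤ M := by
  rw [abs_le]
  constructor
  · rw [neg_le, neg_sub, sub_le_iff_le_add]
    refine Finset.sup'_le _ _ fun i _ => ?_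
    have hi := abs_le.1 (h i)
    have h2 : g i ≤ M + f i := by linarith [hi.1]
    exact le_trans h2 (add_le_add_right (Finset.le_sup' _ (Finset.mem_univ i)) M)
  · rw [sub_le_iff_le_add]
    refine Finset.sup'_le _ _ fun i _ => ?_
    have hi := abs_le.1 (h i)
    have h2 : f i ≤ M + g i := by linarith [hi.2]
    exact le_trans h2 (add_le_add_right (Finset.le_sup' _ (Finset.mem_univ i)) M)

lemma bellman_contract (p : S → A → S → ℝ) (hp : IsKernel p) (R : S → A → ℝ)
    {γ : ℝ} (hγ0 : 0 ≤ γ) (τ : S → A → ℝ) (hτ : IsPolicy τ)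
    (Q1 Q2 : S → A → ℝ) (s : S) (a : A) :
    |bellman p R γ τ Q1 s a - bellman p R γ τ Q2 s a|
      ≤ γ * supNorm (fun s a => Q1 s a - Q2 s a) := by
  have key : bellman p R γ τ Q1 s a - bellman p R γ τ Q2 s a
      = γ * ∑ s', p s a s' * ∑ a', τ s' a' * (Q1 s' a' - Q2 s' a') := by
    simp only [bellman, mul_sub, Finset.sum_sub_distrib]
    ring
  rw [key, abs_mul, abs_of_nonneg hγ0]
  refine mul_le_mul_of_nonneg_left ?_ hγ0
  refine prob_avg_abs_le (fun s' => hp.1 s a s') (hp.2 s a) fun s' => ?_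
  refine prob_avg_abs_le (fun a' => hτ.1 s' a') (hτ.2 s') fun a' => ?_
  exact abs_le_supNorm (fun s a => Q1 s a - Q2 s a) s' a'

lemma bellmanOpt_contract (p : S → A → S → ℝ) (hp : IsKernel p) (R : S → A → ℝ)
    {γ : ℝ} (hγ0 : 0 ≤ γ) (Q1 Q2 : S → A → ℝ) (s : S) (a : A) :
    |bellmanOpt p R γ Q1 s a - bellmanOpt p R γ Q2 s a|
      ≤ γ * supNorm (fun s a => Q1 s a - Q2 s a) := by
  have key : bellmanOpt p R γ Q1 s a - bellmanOpt p R γ Q2 s a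
      = γ * ∑ s', p s a s' *
          (Finset.univ.sup' Finset.univ_nonempty (fun a' => Q1 s' a')
            - Finset.univ.sup' Finset.univ_nonempty (fun a' => Q2 s' a')) := by
    simp only [bellmanOpt, mul_sub, Finset.sum_sub_distrib]
    ring
  rw [key, abs_mul, abs_of_nonneg hγ0]
  refine mul_le_mul_of_nonneg_left ?_ hγ0
  refine prob_avg_abs_le (fun s' => hp.1 s a s') (hp.2 s a) fun s' => ?_
  refine sup'_sub_abs_le _ _ fun a' => ?_
  exact abs_le_supNorm (fun s a => Q1 s a - Q2 s a) s' a'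

lemma bellman_le_opt (p : S → A → S → ℝ) (hp : IsKernel p) (R : S → A → ℝ)
    {γ : ℝ} (hγ0 : 0 ≤ γ) (τ : S → A → ℝ) (hτ : IsPolicy τ)
    (Q : S → A → ℝ) (s : S) (a : A) :
    bellman p R γ τ Q s a ≤ bellmanOpt p R γ Q s a := by
  simp only [bellman, bellmanOpt]
  refine add_le_add_right (mul_le_mul_of_nonneg_left ?_ hγ0) _
  refine Finset.sum_le_sum fun s' _ => mul_le_mul_of_nonneg_left ?_ (hp.1 s a s')
  refine prob_avg_le (fun a' => hτ.1 s' a') (hτ.2 s') fun a' => ?_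
  exact Finset.le_sup' (fun a' => Q s' a') (Finset.mem_univ a')

lemma bellmanOpt_mono (p : S → A → S → ℝ) (hp : IsKernel p) (R : S → A → ℝ)
    {γ : ℝ} (hγ0 : 0 ≤ γ) {Q1 Q2 : S → A → ℝ} (h : ∀ s a, Q1 s a ≤ Q2 s a)
    (s : S) (a : A) : bellmanOpt p R γ Q1 s a ≤ bellmanOpt p R γ Q2 s a := by
  simp only [bellmanOpt]
  refine add_le_add_right (mul_le_mul_of_nonneg_left ?_ hγ0) _
  refine Finset.sum_le_sum fun s' _ => mul_le_mul_of_nonneg_left ?_ (hp.1 s a s')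
  refine Finset.sup'_le _ _ fun a' _ => ?_
  exact le_trans (h s' a') (Finset.le_sup' (fun a' => Q2 s' a') (Finset.mem_univ a'))

lemma bellman_mix (p : S → A → S → ℝ) (R : S → A → ℝ) (γ : ℝ)
    (π πt : S → A → ℝ) (ω : ℝ) (Q : S → A → ℝ) (s : S) (a : A) :
    bellman p R γ (fun s a => (1 - ω) * π s a + ω * πt s a) Q s a
      = (1 - ω) * bellman p R γ π Q s a + ω * bellman p R γ πt Q s a := by
  simp only [bellman]
  have h : ∀ s', ∑ a', ((1 - ω) * π s' a' + ω * πt s' a') * Q s' a'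
      = (1 - ω) * ∑ a', π s' a' * Q s' a' + ω * ∑ a', πt s' a' * Q s' a' := by
    intro s'
    rw [Finset.mul_sum, Finset.mul_sum, ← Finset.sum_add_distrib]
    refine Finset.sum_congr rfl fun a' _ => by ring
  have h2 : ∑ s', p s a s' * ((1 - ω) * (∑ a', π s' a' * Q s' a')
        + ω * ∑ a', πt s' a' * Q s' a')
      = (1 - ω) * ∑ s', p s a s' * ∑ a', π s' a' * Q s' a'
        + ω * ∑ s', p s a s' * ∑ a', πt s' a' * Q s' a' := by
    rw [Finset.mul_sum, Finset.mul_sum, ← Finset.sum_add_distrib]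
    refine Finset.sum_congr rfl fun s' _ => by ring
  simp_rw [h]
  rw [h2]
  ring

/-- Q^π ≤ Q^* pointwise. -/
lemma Qpi_le_Qstar (p : S → A → S → ℝ) (hp : IsKernel p) (R : S → A → ℝ)
    {γ : ℝ} (hγ0 : 0 ≤ γ) (hγ1 : γ < 1)
    (π : S → A → ℝ) (hπ : IsPolicy π) {Qstar Qpi : S → A → ℝ}
    (hQstar : bellmanOpt p R γ Qstar = Qstar)
    (hQpi : bellman p R γ π Qpi = Qpi) (s : S) (a : A) : Qpi s a ≤ Qstar s a := by
  set M := Finset.univ.sup' Finset.univ_nonempty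
    (fun sa : S × A => Qpi sa.1 sa.2 - Qstar sa.1 sa.2) with hM
  have hMle : M ≤ γ * M := by
    obtain ⟨sa, -, hsa⟩ := Finset.exists_mem_eq_sup' (Finset.univ_nonempty (α := S × A))
      (fun sa : S × A => Qpi sa.1 sa.2 - Qstar sa.1 sa.2)
    have hMeq : M = Qpi sa.1 sa.2 - Qstar sa.1 sa.2 := by rw [hM, hsa]
    have h1 : Qpi sa.1 sa.2 - Qstar sa.1 sa.2
        ≤ bellman p R γ π Qpi sa.1 sa.2 - bellman p R γ π Qstar sa.1 sa.2 := by
      rw [hQpi]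
      have := bellman_le_opt p hp R hγ0 π hπ Qstar sa.1 sa.2
      rw [hQstar] at this
      linarith
    calc M = Qpi sa.1 sa.2 - Qstar sa.1 sa.2 := hMeq
      _ ≤ γ * M := ?_
    refine le_trans h1 ?_
    have key : bellman p R γ π Qpi sa.1 sa.2 - bellman p R γ π Qstar sa.1 sa.2
        = γ * ∑ s', p sa.1 sa.2 s' * ∑ a', π s' a' * (Qpi s' a' - Qstar s' a') := by
      simp only [bellman, mul_sub, Finset.sum_sub_distrib]
      ring
    rw [key]
    refine mul_le_mul_of_nonneg_left ?_ hγ0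
    refine prob_avg_le (fun s' => hp.1 sa.1 sa.2 s') (hp.2 sa.1 sa.2) fun s' => ?_
    refine prob_avg_le (fun a' => hπ.1 s' a') (hπ.2 s') fun a' => ?_
    rw [hM]
    exact Finset.le_sup' (fun sa : S × A => Qpi sa.1 sa.2 - Qstar sa.1 sa.2)
      (Finset.mem_univ (s', a'))
  have hM0 : M ≤ 0 := by nlinarith
  have := Finset.le_sup' (fun sa : S × A => Qpi sa.1 sa.2 - Qstar sa.1 sa.2)
    (Finset.mem_univ (s, a))
  simp only at this
  rw [← hM] at this
  linarith

end aux

/-- Bound on the shift of the Q-function of the policy (Lemma A.5). -/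
theorem target_shift_bound {S A : Type*} [Fintype S] [Fintype A] [Nonempty S] [Nonempty A]
    (p : S → A → S → ℝ) (hp : IsKernel p)
    (R : S → A → ℝ) (hR : ∀ s a, 0 ≤ R s a ∧ R s a ≤ 1)
    (γ : ℝ) (hγ : 0 < γ ∧ γ < 1)
    (π πt : S → A → ℝ) (hπ : IsPolicy π) (hπt : IsPolicy πt)
    (ω : ℝ) (hω : 0 ≤ ω ∧ ω ≤ 1)
    (Q Qstar Qpi Qpi' : S → A → ℝ)
    (hQstar : bellmanOpt p R γ Qstar = Qstar)
    (hQpi : bellman p R γ π Qpi = Qpi)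
    (hQpi' : bellman p R γ (fun s a => (1 - ω) * π s a + ω * πt s a) Qpi' = Qpi')
    (χ : ℝ)
    (hχ : χ = supNorm (fun s a => bellmanOpt p R γ Q s a - bellman p R γ πt Q s a)) :
    supNorm (fun s a => Qpi s a - Qpi' s a)
      ≤ (ω / (1 - γ)) * (supNorm (fun s a => Qstar s a - Qpi s a)
          + 2 * supNorm (fun s a => Q s a - Qpi s a) + χ) := by
  obtain ⟨hγ0, hγ1⟩ := hγ
  obtain ⟨hω0, hω1⟩ := hω
  have hγ0' : (0:ℝ) ≤ γ := le_of_lt hγ0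
  have h1γ : (0:ℝ) < 1 - γ := by linarith
  set π' : S → A → ℝ := fun s a => (1 - ω) * π s a + ω * πt s a with hπ'def
  have hπ' : IsPolicy π' := by
    constructor
    · intro s a
      exact add_nonneg (mul_nonneg (by linarith) (hπ.1 s a)) (mul_nonneg hω0 (hπt.1 s a))
    · intro s
      simp only [hπ'def]
      rw [Finset.sum_add_distrib, ← Finset.mul_sum, ← Finset.mul_sum, hπ.2 s, hπt.2 s]
      ring
  set N1 := supNorm (fun s a => Qstar s a - Qpi s a) with hN1
  set N2 := supNorm (fun s a => Q s a - Qpi s a) with hN2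
  set C := supNorm (fun s a => Qpi s a - bellman p R γ πt Qpi s a) with hC
  set D := supNorm (fun s a => Qpi s a - Qpi' s a) with hD
  -- Step 2: C ≤ N1 + 2 * N2 + χ
  have hQpiQstar : ∀ s a, Qpi s a ≤ Qstar s a :=
    Qpi_le_Qstar p hp R hγ0' hγ1 π hπ hQstar hQpi
  have hCB : C ≤ N1 + 2 * N2 + χ := by
    refine supNorm_le fun s a => ?_
    have e1 : |Qpi s a - bellmanOpt p R γ Qpi s a| ≤ N1 := by
      have hlow : Qpi s a ≤ bellmanOpt p R γ Qpi s a := by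
        conv_lhs => rw [← hQpi]
        exact bellman_le_opt p hp R hγ0' π hπ Qpi s a
      have hhigh : bellmanOpt p R γ Qpi s a ≤ Qstar s a := by
        have := bellmanOpt_mono p hp R hγ0' hQpiQstar s a
        rwa [hQstar] at this
      have habs : |Qstar s a - Qpi s a| ≤ N1 :=
        abs_le_supNorm (fun s a => Qstar s a - Qpi s a) s a
      rw [abs_le] at habs ⊢
      constructor <;> [linarith [habs.2]; linarith [habs.1]]
    have e2 : |bellmanOpt p R γ Qpi s a - bellmanOpt p R γ Q s a|
        ≤ γ * supNorm (fun s a => Qpi s a - Q s a) :=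
      bellmanOpt_contract p hp R hγ0' Qpi Q s a
    have e3 : |bellmanOpt p R γ Q s a - bellman p R γ πt Q s a| ≤ χ := by
      rw [hχ]
      exact abs_le_supNorm (fun s a => bellmanOpt p R γ Q s a - bellman p R γ πt Q s a) s a
    have e4 : |bellman p R γ πt Q s a - bellman p R γ πt Qpi s a| ≤ γ * N2 :=
      bellman_contract p hp R hγ0' πt hπt Q Qpi s a
    have hsym : supNorm (fun s a => Qpi s a - Q s a) = N2 := by
      rw [hN2]; exact supNorm_sub_comm _ _
    rw [hsym] at e2
    have hN2nn : 0 ≤ N2 := supNorm_nonneg _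
    calc |Qpi s a - bellman p R γ πt Qpi s a|
        ≤ |Qpi s a - bellmanOpt p R γ Qpi s a|
          + |bellmanOpt p R γ Qpi s a - bellmanOpt p R γ Q s a|
          + |bellmanOpt p R γ Q s a - bellman p R γ πt Q s a|
          + |bellman p R γ πt Q s a - bellman p R γ πt Qpi s a| := by
          have := abs_sub_le (Qpi s a) (bellmanOpt p R γ Qpi s a) (bellman p R γ πt Qpi s a)
          have h2 := abs_sub_le (bellmanOpt p R γ Qpi s a) (bellmanOpt p R γ Q s a)
            (bellman p R γ πt Qpi s a)
          have h3 := abs_sub_le (bellmanOpt p R γ Q s a) (bellman p R γ πt Q s a)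
            (bellman p R γ πt Qpi s a)
          linarith
      _ ≤ N1 + γ * N2 + χ + γ * N2 := by linarith
      _ ≤ N1 + 2 * N2 + χ := by nlinarith
  -- Step 1: D ≤ ω * C + γ * D
  have hDstep : D ≤ ω * C + γ * D := by
    refine supNorm_le fun s a => ?_
    have key : Qpi s a - Qpi' s a
        = ω * (Qpi s a - bellman p R γ πt Qpi s a)
          + (bellman p R γ π' Qpi s a - bellman p R γ π' Qpi' s a) := by
      have hmix := bellman_mix p R γ π πt ω Qpi s a
      have h1 : bellman p R γ π Qpi s a = Qpi s a := by rw [hQpi]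
      have h2 : bellman p R γ π' Qpi' s a = Qpi' s a := by
        have := congrFun (congrFun hQpi' s) a
        exact this
      rw [h2]
      rw [← hπ'def] at hmix
      rw [hmix, h1]
      ring
    rw [key]
    have e1 : |ω * (Qpi s a - bellman p R γ πt Qpi s a)| ≤ ω * C := by
      rw [abs_mul, abs_of_nonneg hω0]
      exact mul_le_mul_of_nonneg_left
        (abs_le_supNorm (fun s a => Qpi s a - bellman p R γ πt Qpi s a) s a) hω0
    have e2 : |bellman p R γ π' Qpi s a - bellman p R γ π' Qpi' s a| ≤ γ * D :=
      bellman_contract p hp R hγ0' π' hπ' Qpi Qpi' s a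
    calc |ω * (Qpi s a - bellman p R γ πt Qpi s a)
          + (bellman p R γ π' Qpi s a - bellman p R γ π' Qpi' s a)|
        ≤ _ + _ := abs_add_le _ _
      _ ≤ ω * C + γ * D := add_le_add e1 e2
  -- combine
  have hDle : (1 - γ) * D ≤ ω * C := by nlinarith
  have hCnn : 0 ≤ C := supNorm_nonneg _
  rw [div_mul_eq_mul_div, le_div_iff₀ h1γ]
  calc D * (1 - γ) = (1 - γ) * D := by ring
    _ ≤ ω * C := hDle
    _ ≤ ω * (N1 + 2 * N2 + χ) := mul_le_mul_of_nonneg_left hCB hω0
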